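/- For a symmetric d×d matrix B and δ ∈ (0,1), the Frobenius inner product satisfies (B − [B]_δ⁻¹) : ([B]_δ − I) ≥ ([B]_δ^{1/2} − [B]_δ^{−1/2}) : ([B]_δ^{1/2} − [B]_δ^{−1/2}), i.e., (B − [B]_δ⁻¹) : ([B]_δ − I) ≥ ‖[B]_δ^{1/2} − [B]_δ^{−1/2}‖_F². -/

import Mathlib

open Matrix Finset

/-- Frobenius inner product of two real matrices. -/
noncomputable def frob {d : ℕ} (X Y : Matrix (Fin d) (Fin d) ℝ) : ℝ :=
  ∑ i, ∑ j, X i j * Y i j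

lemma scalar_key (s δ : ℝ) (h0 : 0 < δ) (h1 : δ < 1) :
    (Real.sqrt (max s δ) - (Real.sqrt (max s δ))⁻¹) *
      (Real.sqrt (max s δ) - (Real.sqrt (max s δ))⁻¹) ≤
      (s - (max s δ)⁻¹) * (max s δ - 1) := by
  set m := max s δ with hm
  have hmpos : 0 < m := lt_max_of_lt_right h0
  set r := Real.sqrt m with hr
  have hrpos : 0 < r := Real.sqrt_pos.mpr hmpos
  have hrr : r * r = m := Real.mul_self_sqrt hmpos.le
  have hra : r * r⁻¹ = 1 := mul_inv_cancel₀ hrpos.ne'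
  have hmb : m * m⁻¹ = 1 := mul_inv_cancel₀ hmpos.ne'
  have hab : r⁻¹ * r⁻¹ = m⁻¹ := by
    field_simp
    exact hrr.symm.trans (sq r).symm
  have key : 0 ≤ (m - 1) * (s - 1) := by
    rcases le_total s 1 with h | h
    · have hm1 : m ≤ 1 := max_le h h1.le
      nlinarith
    · have : m = s := max_eq_left (h1.le.trans h)
      nlinarith
  nlinarith [mul_nonneg hmpos.le key, hmb, hrr, hra, hab]

theorem cutoff_matrix_relaxation {d : ℕ} (δ : ℝ) (hδ : δ ∈ Set.Ioo (0 : ℝ) 1)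
    (B Q : Matrix (Fin d) (Fin d) ℝ) (dvec : Fin d → ℝ)
    (hBs : B.IsSymm) (hQ : Qᵀ * Q = 1)
    (hspec : B = Q * Matrix.diagonal dvec * Qᵀ) :
    let Bδ := Q * Matrix.diagonal (fun i => max (dvec i) δ) * Qᵀ
    let Bδhalf := Q * Matrix.diagonal (fun i => Real.sqrt (max (dvec i) δ)) * Qᵀ
    frob (Bδhalf - Bδhalf⁻¹) (Bδhalf - Bδhalf⁻¹) ≤ frob (B - Bδ⁻¹) (Bδ - 1) := by
  intro Bδ Bδhalf
  obtain ⟨hδ0, hδ1⟩ := hδ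
  have hQQ : Q * Qᵀ = 1 := mul_eq_one_comm.mp hQ
  have conj_sub : ∀ f g : Fin d → ℝ,
      Q * Matrix.diagonal f * Qᵀ - Q * Matrix.diagonal g * Qᵀ
        = Q * Matrix.diagonal (f - g) * Qᵀ := by
    intro f g
    have hd : Matrix.diagonal (f - g) = Matrix.diagonal f - Matrix.diagonal g := by
      ext i j
      by_cases h : i = j <;> simp [Matrix.diagonal_apply, h]
    rw [hd]
    noncomm_ring
  have conj_one : Q * Matrix.diagonal (fun _ : Fin d => (1:ℝ)) * Qᵀ = 1 := by
    simp [Matrix.diagonal_one, hQQ]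
  have inv_conj : ∀ f : Fin d → ℝ, (∀ i, f i ≠ 0) →
      (Q * Matrix.diagonal f * Qᵀ)⁻¹ = Q * Matrix.diagonal (fun i => (f i)⁻¹) * Qᵀ := by
    intro f hf
    apply Matrix.inv_eq_right_inv
    have hfg : (fun i => f i * (f i)⁻¹) = fun _ => (1:ℝ) := funext fun i => mul_inv_cancel₀ (hf i)
    have : Matrix.diagonal f * Matrix.diagonal (fun i => (f i)⁻¹) = 1 := by
      rw [Matrix.diagonal_mul_diagonal, hfg, Matrix.diagonal_one]
    calc Q * Matrix.diagonal f * Qᵀ * (Q * Matrix.diagonal (fun i => (f i)⁻¹) * Qᵀ)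
        = Q * Matrix.diagonal f * (Qᵀ * Q) * Matrix.diagonal (fun i => (f i)⁻¹) * Qᵀ := by
          noncomm_ring
      _ = Q * (Matrix.diagonal f * Matrix.diagonal (fun i => (f i)⁻¹)) * Qᵀ := by
          rw [hQ]; noncomm_ring
      _ = 1 := by rw [this]; simp [hQQ]
  have frob_conj : ∀ f g : Fin d → ℝ,
      frob (Q * Matrix.diagonal f * Qᵀ) (Q * Matrix.diagonal g * Qᵀ) = ∑ i, f i * g i := by
    intro f g
    have htr : ∀ X Y : Matrix (Fin d) (Fin d) ℝ, frob X Y = Matrix.trace (X * Yᵀ) := by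
      intro X Y
      simp [frob, Matrix.trace, Matrix.diag, Matrix.mul_apply, Matrix.transpose_apply]
    rw [htr]
    have h2 : (Q * Matrix.diagonal g * Qᵀ)ᵀ = Q * Matrix.diagonal g * Qᵀ := by
      simp [Matrix.transpose_mul, Matrix.diagonal_transpose, Matrix.mul_assoc]
    rw [h2]
    have h3 : (Q * Matrix.diagonal f * Qᵀ) * (Q * Matrix.diagonal g * Qᵀ)
        = Q * (Matrix.diagonal f * Matrix.diagonal g) * Qᵀ := by
      calc (Q * Matrix.diagonal f * Qᵀ) * (Q * Matrix.diagonal g * Qᵀ)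
          = Q * Matrix.diagonal f * (Qᵀ * Q) * Matrix.diagonal g * Qᵀ := by noncomm_ring
        _ = Q * (Matrix.diagonal f * Matrix.diagonal g) * Qᵀ := by rw [hQ]; noncomm_ring
    rw [h3, Matrix.trace_mul_comm, ← Matrix.mul_assoc, hQ, Matrix.one_mul,
      Matrix.diagonal_mul_diagonal, Matrix.trace_diagonal]
  set m : Fin d → ℝ := fun i => max (dvec i) δ with hmdef
  have hmpos : ∀ i, 0 < m i := fun i => lt_max_of_lt_right hδ0
  have hBδinv : Bδ⁻¹ = Q * Matrix.diagonal (fun i => (m i)⁻¹) * Qᵀ :=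
    inv_conj m (fun i => (hmpos i).ne')
  have hBhinv : Bδhalf⁻¹ = Q * Matrix.diagonal (fun i => (Real.sqrt (m i))⁻¹) * Qᵀ :=
    inv_conj _ (fun i => (Real.sqrt_pos.mpr (hmpos i)).ne')
  have e1 : Bδhalf - Bδhalf⁻¹
      = Q * Matrix.diagonal ((fun i => Real.sqrt (m i)) - fun i => (Real.sqrt (m i))⁻¹) * Qᵀ := by
    rw [hBhinv]; exact conj_sub _ _
  have e2 : B - Bδ⁻¹ = Q * Matrix.diagonal (dvec - fun i => (m i)⁻¹) * Qᵀ := by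
    rw [hspec, hBδinv]; exact conj_sub _ _
  have e3 : Bδ - 1 = Q * Matrix.diagonal (m - fun _ => (1:ℝ)) * Qᵀ := by
    rw [← conj_one]; exact conj_sub _ _
  rw [e1, e2, e3, frob_conj, frob_conj]
  apply Finset.sum_le_sum
  intro i _
  simpa using scalar_key (dvec i) δ hδ0 hδ1
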